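/- Let μ be a finite Borel measure on ℝ supported on [0, ∞) (i.e. μ((−∞,0)) = 0) with ∫ λ dμ(λ) < ∞, and let a > 0. Then (1/θ) ∫ |1 − exp(i a λ (e^{2πiθ} − 1))|² dμ(λ) → 0 as θ → 0⁺. -/

import Mathlib

open MeasureTheory Filter

lemma one_sub_cos_le_half_sq' (t : ℝ) : 1 - Real.cos t ≤ t^2/2 := by
  have h1 : Real.cos t = Real.cos (t/2)^2 - Real.sin (t/2)^2 := by
    have := Real.cos_two_mul' (x := t/2)
    rwa [show 2*(t/2) = t by ring] at this
  have h2 := Real.sin_sq_add_cos_sq (t/2)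
  have h3 := Real.sin_sq_le_sq (x := t/2)
  nlinarith

lemma one_sub_cos_le_abs' (t : ℝ) : 1 - Real.cos t ≤ |t| := by
  rcases le_or_gt (|t|) 2 with h | h
  · have := one_sub_cos_le_half_sq' t
    have h2 : t^2 = |t|^2 := (sq_abs t).symm
    nlinarith [abs_nonneg t]
  · have := Real.neg_one_le_cos t
    linarith

lemma aux_eq (u v : ℝ) :
    (‖1 - Complex.exp (↑u + ↑v * Complex.I)‖)^2
      = (1 - Real.exp u)^2 + 2 * Real.exp u * (1 - Real.cos v) := by
  rw [Complex.sq_norm, Complex.normSq_apply]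
  simp [Complex.exp_re, Complex.exp_im]
  linear_combination (Real.exp u)^2 * (Real.sin_sq_add_cos_sq v)

lemma est1 (u v : ℝ) (hu : u ≤ 0) :
    (1 - Real.exp u)^2 + 2 * Real.exp u * (1 - Real.cos v) ≤ -u + 2 * |v| := by
  have h1 := Real.add_one_le_exp u
  have h2 : Real.exp u ≤ 1 := Real.exp_le_one_iff.mpr hu
  have h3 := Real.exp_nonneg u
  have h4 := one_sub_cos_le_abs' v
  have h5 := Real.cos_le_one v
  nlinarith

lemma est2 (u v : ℝ) (hu : u ≤ 0) :
    (1 - Real.exp u)^2 + 2 * Real.exp u * (1 - Real.cos v) ≤ u^2 + v^2 := by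
  have h1 := Real.add_one_le_exp u
  have h2 : Real.exp u ≤ 1 := Real.exp_le_one_iff.mpr hu
  have h3 := Real.exp_nonneg u
  have h4 := one_sub_cos_le_half_sq' v
  have h5 := Real.cos_le_one v
  nlinarith

lemma arg_eq (a x θ : ℝ) :
    Complex.I * (a:ℂ) * (x:ℂ) * (Complex.exp (2 * (Real.pi:ℂ) * Complex.I * (θ:ℂ)) - 1)
      = ↑(-(a * x * Real.sin (2*Real.pi*θ))) + ↑(a * x * (Real.cos (2*Real.pi*θ) - 1)) * Complex.I := by
  have h : (2 * (Real.pi:ℂ) * Complex.I * (θ:ℂ)) = ((2*Real.pi*θ : ℝ) : ℂ) * Complex.I := by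
    push_cast; ring
  rw [h, Complex.exp_mul_I, ← Complex.ofReal_cos, ← Complex.ofReal_sin]
  apply Complex.ext <;> simp <;> ring

lemma combined (a x θ : ℝ) (ha : 0 ≤ a) (hx : 0 ≤ x) (hθ0 : 0 < θ) (hθ1 : θ ≤ 1/2) :
    (‖1 - Complex.exp (Complex.I * (a:ℂ) * (x:ℂ) *
        (Complex.exp (2 * (Real.pi:ℂ) * Complex.I * (θ:ℂ)) - 1))‖)^2
      ≤ min (2*Real.pi*(1+Real.pi)*a*x*θ) (8*Real.pi^2*a^2*x^2*θ^2) := by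
  have hπ := Real.pi_pos
  rw [arg_eq, aux_eq]
  set φ := 2*Real.pi*θ with hφ
  have hφ0 : 0 ≤ φ := by positivity
  have hφπ : φ ≤ Real.pi := by rw [hφ]; nlinarith
  have hs0 : 0 ≤ Real.sin φ := Real.sin_nonneg_of_nonneg_of_le_pi hφ0 hφπ
  have hs1 : Real.sin φ ≤ φ := Real.sin_le hφ0
  have hc1 : Real.cos φ ≤ 1 := Real.cos_le_one φ
  have hc2 : 1 - Real.cos φ ≤ φ^2/2 := one_sub_cos_le_half_sq' φ
  have hc3 : 1 - Real.cos φ ≤ φ := (one_sub_cos_le_abs' φ).trans_eq (abs_of_nonneg hφ0)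
  have hax : 0 ≤ a*x := mul_nonneg ha hx
  have hu : -(a*x*Real.sin φ) ≤ 0 := by nlinarith
  have e1 := est1 (-(a*x*Real.sin φ)) (a*x*(Real.cos φ - 1)) hu
  have e2 := est2 (-(a*x*Real.sin φ)) (a*x*(Real.cos φ - 1)) hu
  have habs : |a*x*(Real.cos φ - 1)| = a*x*(1 - Real.cos φ) := by
    rw [abs_of_nonpos (by nlinarith)]; ring
  rw [habs] at e1
  refine le_min (e1.trans ?_) (e2.trans ?_)
  · have k1 : a*x*Real.sin φ ≤ a*x*φ := mul_le_mul_of_nonneg_left hs1 hax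
    have k2 : a*x*(1 - Real.cos φ) ≤ a*x*(φ^2/2) := mul_le_mul_of_nonneg_left hc2 hax
    have k3 : a*x*φ^2 ≤ a*x*(Real.pi*φ) := by nlinarith
    rw [hφ] at *
    nlinarith
  · have hsq1 : (Real.cos φ - 1)^2 ≤ φ^2 := by nlinarith
    have hsq2 : Real.sin φ^2 ≤ φ^2 := Real.sin_sq_le_sq
    have k1 := mul_le_mul_of_nonneg_left hsq1 (sq_nonneg (a*x))
    have k2 := mul_le_mul_of_nonneg_left hsq2 (sq_nonneg (a*x))
    rw [hφ] at *
    nlinarith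

theorem tendsto_integral_sq_abs_one_sub_exp (μ : Measure ℝ) [IsFiniteMeasure μ]
    (hsupp : μ (Set.Iio 0) = 0)
    (hmom : Integrable (fun x : ℝ => x) μ)
    (a : ℝ) (ha : 0 < a) :
    Tendsto (fun θ : ℝ => θ⁻¹ *
        ∫ x, (‖1 - Complex.exp (Complex.I * (a : ℂ) * (x : ℂ) *
          (Complex.exp (2 * (Real.pi : ℂ) * Complex.I * (θ : ℂ)) - 1))‖) ^ 2 ∂μ)
      (nhdsWithin 0 (Set.Ioi 0)) (nhds 0) := by
  have hπ := Real.pi_pos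
  have hae : ∀ᵐ x ∂μ, 0 ≤ x := by
    rw [ae_iff]
    simpa [Set.Iio, not_le] using hsupp
  have hIoc : Set.Ioc (0:ℝ) (1/2) ∈ nhdsWithin (0:ℝ) (Set.Ioi 0) :=
    Ioc_mem_nhdsGT_of_mem (by norm_num)
  simp_rw [← MeasureTheory.integral_const_mul]
  rw [show nhds (0:ℝ) = nhds (∫ _x, (0:ℝ) ∂μ) by simp]
  apply tendsto_integral_filter_of_dominated_convergence
      (fun x => 2*Real.pi*(1+Real.pi)*a*x)
  · filter_upwards with θ
    exact (continuous_const.mul ((continuous_norm.comp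
      (continuous_const.sub (Complex.continuous_exp.comp
        ((continuous_const.mul Complex.continuous_ofReal).mul continuous_const)))).pow 2)).aestronglyMeasurable
  · filter_upwards [hIoc] with θ hθ
    filter_upwards [hae] with x hx
    have hF0 : (0:ℝ) ≤ (‖1 - Complex.exp (Complex.I * (a:ℂ) * (x:ℂ) *
        (Complex.exp (2 * (Real.pi:ℂ) * Complex.I * (θ:ℂ)) - 1))‖)^2 := by positivity
    have hθ0 : θ ≠ 0 := ne_of_gt hθ.1
    rw [Real.norm_eq_abs, abs_of_nonneg (mul_nonneg (inv_nonneg.2 hθ.1.le) hF0)]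
    have hb := ((combined a x θ ha.le hx hθ.1 hθ.2).trans (min_le_left _ _))
    have := mul_le_mul_of_nonneg_left hb (inv_nonneg.2 hθ.1.le)
    calc θ⁻¹ * _ ≤ θ⁻¹ * (2*Real.pi*(1+Real.pi)*a*x*θ) := this
      _ = 2*Real.pi*(1+Real.pi)*a*x := by field_simp
  · exact hmom.const_mul _
  · filter_upwards [hae] with x hx
    apply squeeze_zero'
    · filter_upwards [hIoc] with θ hθ
      exact mul_nonneg (inv_nonneg.2 hθ.1.le) (by positivity)
    · filter_upwards [hIoc] with θ hθ
      have hθ0 : θ ≠ 0 := ne_of_gt hθ.1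
      have hb := ((combined a x θ ha.le hx hθ.1 hθ.2).trans (min_le_right _ _))
      have := mul_le_mul_of_nonneg_left hb (inv_nonneg.2 hθ.1.le)
      calc θ⁻¹ * _ ≤ θ⁻¹ * (8*Real.pi^2*a^2*x^2*θ^2) := this
        _ = 8*Real.pi^2*a^2*x^2*θ := by
            field_simp
    · have : Tendsto (fun θ : ℝ => 8*Real.pi^2*a^2*x^2*θ) (nhds 0) (nhds 0) := by
        simpa using (continuous_mul_left (8*Real.pi^2*a^2*x^2)).tendsto (0:ℝ)
      exact this.mono_left nhdsWithin_le_nhds
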